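/- Every graph on n ≥ 4 vertices with at least 2n − 2 edges has a K_4 minor. -/

import Mathlib

open SimpleGraph Set

attribute [local instance] Classical.propDecidable

/-- The chromatic number of a graph as a natural number. -/
noncomputable def chromNum {V : Type*} (G : SimpleGraph V) : ℕ := sInf {n | G.Colorable n}

/-- A set of vertices is independent if its elements are pairwise non-adjacent. -/
def IsIndepSet {V : Type*} (G : SimpleGraph V) (A : Set V) : Prop := Gᶜ.IsClique A

/-- The independence number of a graph: the clique number of the complement. -/
noncomputable def indepNum {V : Type*} (G : SimpleGraph V) [Fintype V] : ℕ := Gᶜ.cliqueNum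

/-- A vertex is bisimplicial if its neighborhood is the union of two cliques. -/
def Bisimplicial {V : Type*} (G : SimpleGraph V) (x : V) : Prop :=
  ∃ A B : Set V, G.IsClique A ∧ G.IsClique B ∧ G.neighborSet x = A ∪ B

/-- `G` has a `K_k` minor: there are `k` pairwise disjoint connected branch sets,
pairwise joined by an edge. -/
def HasKMinor {V : Type*} (G : SimpleGraph V) (k : ℕ) : Prop :=
  ∃ f : Fin k → Set V,
    (Pairwise fun i j => Disjoint (f i) (f j)) ∧
    (∀ i, (G.induce (f i)).Connected) ∧
    (∀ i j, i ≠ j → ∃ u ∈ f i, ∃ v ∈ f j, G.Adj u v)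

/-- A graph has an even hole if some even cycle of length at least 4 embeds in it
as an induced subgraph. -/
def HasEvenHole {V : Type*} (G : SimpleGraph V) : Prop :=
  ∃ n : ℕ, 4 ≤ n ∧ Even n ∧ Nonempty (cycleGraph n ↪g G)

/-- A graph is even-hole-free if it has no even hole. -/
def EvenHoleFree {V : Type*} (G : SimpleGraph V) : Prop := ¬ HasEvenHole G

section MaderAux

variable {V : Type*}

/-- Graph with all edges at `v` removed. -/
private def delv (G : SimpleGraph V) (v : V) : SimpleGraph V where
  Adj u w := G.Adj u w ∧ u ≠ v ∧ w ≠ v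
  symm := ⟨fun u w h => ⟨h.1.symm, h.2.2, h.2.1⟩⟩
  loopless := ⟨fun u h => G.loopless.irrefl u h.1⟩

private lemma delv_le (G : SimpleGraph V) (v : V) : delv G v ≤ G := fun _ _ h => h.1

private lemma delv_card [Fintype V] (G : SimpleGraph V) (v : V) :
    G.edgeFinset.card = (delv G v).edgeFinset.card + G.degree v := by
  classical
  rw [← card_incidenceFinset_eq_degree, ← Finset.card_union_of_disjoint]
  · congr 1
    ext e
    refine Sym2.ind (fun u w => ?_) e
    simp only [mem_edgeFinset, Finset.mem_union, mem_edgeSet, mem_incidenceFinset,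
      mk'_mem_incidenceSet_iff]
    show G.Adj u w ↔ (G.Adj u w ∧ u ≠ v ∧ w ≠ v) ∨ G.Adj u w ∧ (v = u ∨ v = w)
    by_cases hu : u = v <;> by_cases hw : w = v <;> tauto
  · rw [Finset.disjoint_left]
    intro e he hi
    refine Sym2.ind (fun u w he hi => ?_) e he hi
    rw [mem_edgeFinset, mem_edgeSet] at he
    rw [mem_incidenceFinset, mk'_mem_incidenceSet_iff] at hi
    obtain ⟨-, hu, hw⟩ := he
    rcases hi.2 with h | h <;> [exact hu h.symm; exact hw h.symm]


private lemma induce_singleton_connected (G : SimpleGraph V) (x : V) :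
    (G.induce {x}).Connected := by
  have : Nonempty ({x} : Set V) := ⟨⟨x, rfl⟩⟩
  refine ⟨fun u w => ?_⟩
  obtain ⟨u, hu⟩ := u
  obtain ⟨w, hw⟩ := w
  cases hu
  cases hw
  rfl

private lemma hasKMinor_mono {G G' : SimpleGraph V} (h : G ≤ G') {k : ℕ}
    (hm : HasKMinor G k) : HasKMinor G' k := by
  obtain ⟨f, hd, hc, ha⟩ := hm
  refine ⟨f, hd, fun i => (hc i).mono (fun u w hw => h hw), fun i j hij => ?_⟩
  obtain ⟨u, hu, w, hw, huw⟩ := ha i j hij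
  exact ⟨u, hu, w, hw, h huw⟩

private lemma hasKMinor_of_clique4 {G : SimpleGraph V} {a b c d : V}
    (hab : G.Adj a b) (hac : G.Adj a c) (had : G.Adj a d)
    (hbc : G.Adj b c) (hbd : G.Adj b d) (hcd : G.Adj c d) :
    HasKMinor G 4 := by
  refine ⟨fun i => {![a, b, c, d] i}, ?_, fun i => induce_singleton_connected _ _, ?_⟩
  · have : ∀ i j : Fin 4, i ≠ j → ![a, b, c, d] i ≠ ![a, b, c, d] j := by
      intro i j hij
      fin_cases i <;> fin_cases j <;>
        first
          | exact absurd rfl hij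
          | simp only [Matrix.cons_val_zero, Matrix.cons_val_one, Matrix.head_cons,
              Matrix.cons_val_two, Matrix.tail_cons, Matrix.cons_val_three]
      · exact hab.ne
      · exact hac.ne
      · exact had.ne
      · exact hab.ne'
      · exact hbc.ne
      · exact hbd.ne
      · exact hac.ne'
      · exact hbc.ne'
      · exact hcd.ne
      · exact had.ne'
      · exact hbd.ne'
      · exact hcd.ne'
    intro i j hij
    exact Set.disjoint_singleton.2 (this i j hij)
  · intro i j hij
    refine ⟨_, rfl, _, rfl, ?_⟩
    fin_cases i <;> fin_cases j <;>
      simp only [Matrix.cons_val_zero, Matrix.cons_val_one, Matrix.head_cons,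
        Matrix.cons_val_two, Matrix.tail_cons, Matrix.cons_val_three] <;>
      first
        | exact absurd rfl hij
        | assumption
        | exact hab.symm
        | exact hac.symm
        | exact had.symm
        | exact hbc.symm
        | exact hbd.symm
        | exact hcd.symm


/-- The contraction of the edge `va` onto `a`, leaving `v` isolated. -/
private def ctr (G : SimpleGraph V) (v a : V) : SimpleGraph V where
  Adj u w := u ≠ w ∧ u ≠ v ∧ w ≠ v ∧
    (G.Adj u w ∨ (u = a ∧ G.Adj v w) ∨ (w = a ∧ G.Adj v u))
  symm := ⟨fun u w h => by
    obtain ⟨h1, h2, h3, h4⟩ := h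
    refine ⟨h1.symm, h3, h2, ?_⟩
    rcases h4 with h | h | h
    · exact Or.inl h.symm
    · exact Or.inr (Or.inr h)
    · exact Or.inr (Or.inl h)⟩
  loopless := ⟨fun u h => h.1 rfl⟩

private lemma ctr_not_adj_left {G : SimpleGraph V} {v a w : V} : ¬ (ctr G v a).Adj v w :=
  fun h => h.2.1 rfl

private lemma delv_le_ctr {G : SimpleGraph V} {v a : V} : delv G v ≤ ctr G v a :=
  fun _ _ h => ⟨h.1.ne, h.2.1, h.2.2, Or.inl h.1⟩

/-- Reachability in the contracted graph lifts. -/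
private lemma ctr_reach {G : SimpleGraph V} {v a : V} (hva : G.Adj v a)
    {S : Set V} (x y : S)
    (h : ((ctr G v a).induce S).Reachable x y) :
    (G.induce (insert v S)).Reachable ⟨x.1, Or.inr x.2⟩ ⟨y.1, Or.inr y.2⟩ := by
  obtain ⟨p⟩ := h
  induction p with
  | nil => rfl
  | @cons u w _ huw p ih =>
    obtain ⟨u, hu⟩ := u
    obtain ⟨w, hw⟩ := w
    refine Reachable.trans ?_ ih
    obtain ⟨-, huv, hwv, hcase⟩ := huw
    rcases hcase with h | ⟨hua, h⟩ | ⟨hwa, h⟩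
    · exact (SimpleGraph.Adj.reachable (by exact h :
        (G.induce (insert v S)).Adj ⟨u, Or.inr hu⟩ ⟨w, Or.inr hw⟩))
    · -- u = a and G.Adj v w : go a - v - w
      exact (SimpleGraph.Adj.reachable (by
          show G.Adj u v
          have h' : u = a := hua
          rw [h']
          exact hva.symm :
        (G.induce (insert v S)).Adj ⟨u, Or.inr hu⟩ ⟨v, Or.inl rfl⟩)).trans
        (SimpleGraph.Adj.reachable (by exact h :
        (G.induce (insert v S)).Adj ⟨v, Or.inl rfl⟩ ⟨w, Or.inr hw⟩))
    · -- w = a and G.Adj v u : go u - v - a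
      exact (SimpleGraph.Adj.reachable (by exact h.symm :
        (G.induce (insert v S)).Adj ⟨u, Or.inr hu⟩ ⟨v, Or.inl rfl⟩)).trans
        (SimpleGraph.Adj.reachable (by
          show G.Adj v w
          have h' : w = a := hwa
          rw [h']
          exact hva :
        (G.induce (insert v S)).Adj ⟨v, Or.inl rfl⟩ ⟨w, Or.inr hw⟩))

private lemma ctr_connected_lift {G : SimpleGraph V} {v a : V} (hva : G.Adj v a)
    {S : Set V} (hS : ((ctr G v a).induce S).Connected) (haS : a ∈ S) (hvS : v ∉ S) :
    (G.induce (insert v S)).Connected := by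
  have hne : Nonempty (insert v S : Set V) := ⟨⟨a, Or.inr haS⟩⟩
  have key : ∀ x : (insert v S : Set V),
      (G.induce (insert v S)).Reachable x ⟨a, Or.inr haS⟩ := by
    rintro ⟨x, hx | hx⟩
    · have : (G.induce (insert v S)).Adj ⟨x, Or.inl hx⟩ ⟨a, Or.inr haS⟩ := by
        show G.Adj x a
        rw [hx]
        exact hva
      exact this.reachable
    · exact ctr_reach hva ⟨x, hx⟩ ⟨a, haS⟩ (hS.preconnected _ _)
  exact ⟨fun x y => (key x).trans (key y).symm⟩

private lemma ctr_minor_lift {G : SimpleGraph V} {v a : V} (hva : G.Adj v a)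
    (h : HasKMinor (ctr G v a) 4) : HasKMinor G 4 := by
  obtain ⟨f, hd, hc, ha⟩ := h
  -- v is in no branch set
  have hvf : ∀ i, v ∉ f i := by
    intro i hvi
    have hj : ∃ j : Fin 4, j ≠ i := by
      rcases Decidable.eq_or_ne i 0 with h0 | h0
      · exact ⟨1, by simp [h0]⟩
      · exact ⟨0, Ne.symm h0⟩
    obtain ⟨j, hj⟩ := hj
    obtain ⟨u, hu, w, hw, huw⟩ := ha i j (Ne.symm hj)
    rcases Decidable.eq_or_ne u v with rfl | huv
    · exact ctr_not_adj_left huw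
    · -- v reaches u inside f i; first step contradicts isolation of v
      obtain ⟨p⟩ := (hc i).preconnected ⟨v, hvi⟩ ⟨u, hu⟩
      cases p with
      | nil => exact huv rfl
      | cons hadj _ => exact ctr_not_adj_left hadj
  classical
  refine ⟨fun i => if a ∈ f i then insert v (f i) else f i, ?_, ?_, ?_⟩
  · intro i j hij
    rw [Set.disjoint_left]
    intro x hxi hxj
    have hsub : ∀ k, ∀ y, y ∈ (if a ∈ f k then insert v (f k) else f k) →
        y ∈ f k ∨ (y = v ∧ a ∈ f k) := by
      intro k y hy
      split_ifs at hy with hk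
      · rcases hy with rfl | hy
        · exact Or.inr ⟨rfl, hk⟩
        · exact Or.inl hy
      · exact Or.inl hy
    rcases hsub i x hxi with hx | ⟨hxv, hai⟩
    · rcases hsub j x hxj with hx' | ⟨hxv', haj⟩
      · exact (hd hij).le_bot ⟨hx, hx'⟩ |>.elim
      · exact hvf i (hxv' ▸ hx)
    · rcases hsub j x hxj with hx' | ⟨-, haj⟩
      · exact hvf j (hxv ▸ hx')
      · exact (hd hij).le_bot ⟨hai, haj⟩ |>.elim
  · intro i
    change (G.induce (if a ∈ f i then insert v (f i) else f i)).Connected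
    by_cases hai : a ∈ f i
    · rw [if_pos hai]
      exact ctr_connected_lift hva (hc i) hai (hvf i)
    · rw [if_neg hai]
      refine (hc i).mono ?_
      intro u w huw
      obtain ⟨u, hu⟩ := u
      obtain ⟨w, hw⟩ := w
      obtain ⟨-, -, -, hcase⟩ := huw
      rcases hcase with h | ⟨hua, -⟩ | ⟨hwa, -⟩
      · exact h
      · exact absurd ((by exact hua : u = a) ▸ hu) hai
      · exact absurd ((by exact hwa : w = a) ▸ hw) hai
  · intro i j hij
    obtain ⟨u, hu, w, hw, huw⟩ := ha i j hij
    obtain ⟨-, -, -, hcase⟩ := huw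
    have hfi : ∀ k, f k ⊆ (if a ∈ f k then insert v (f k) else f k) := by
      intro k
      split_ifs <;> [exact Set.subset_insert _ _; exact le_rfl]
    rcases hcase with h | ⟨hua, h⟩ | ⟨hwa, h⟩
    · exact ⟨u, hfi i hu, w, hfi j hw, h⟩
    · refine ⟨v, ?_, w, hfi j hw, h⟩
      show v ∈ if a ∈ f i then insert v (f i) else f i
      rw [if_pos (show a ∈ f i from (by exact hua : u = a) ▸ hu)]
      exact Or.inl rfl
    · refine ⟨u, hfi i hu, v, ?_, h.symm⟩
      show v ∈ if a ∈ f j then insert v (f j) else f j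
      rw [if_pos (show a ∈ f j from (by exact hwa : w = a) ▸ hw)]
      exact Or.inl rfl


private def efs (t : Finset (Sym2 V)) : SimpleGraph V where
  Adj u w := u ≠ w ∧ s(u, w) ∈ t
  symm := ⟨fun u w h => ⟨h.1.symm, Sym2.eq_swap ▸ h.2⟩⟩
  loopless := ⟨fun u h => h.1 rfl⟩

private lemma exists_sub [Fintype V] (G : SimpleGraph V) (k : ℕ)
    (hk : k ≤ G.edgeFinset.card) :
    ∃ H : SimpleGraph V, H ≤ G ∧ H.edgeFinset.card = k := by
  classical
  obtain ⟨t, hts, htc⟩ := Finset.exists_subset_card_eq hk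
  refine ⟨efs t, fun u w h => (mem_edgeSet _).1 ((mem_edgeFinset).1 (hts h.2)), ?_⟩
  have het : (efs t).edgeFinset = t := by
    ext e
    refine Sym2.ind (fun u w => ?_) e
    rw [mem_edgeFinset, mem_edgeSet]
    show (u ≠ w ∧ s(u, w) ∈ t) ↔ s(u, w) ∈ t
    refine ⟨And.right, fun h => ⟨?_, h⟩⟩
    intro huw
    exact G.not_isDiag_of_mem_edgeSet ((mem_edgeFinset).1 (hts h)) (by simp [huw])
  rw [het, htc]

private lemma base4 [Fintype V] (G : SimpleGraph V) (s : Finset V) (hs : s.card = 4)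
    (hsupp : ∀ u w, G.Adj u w → u ∈ s) (he : 6 ≤ G.edgeFinset.card) :
    ∀ x ∈ s, ∀ y ∈ s, x ≠ y → G.Adj x y := by
  classical
  set t := s.sym2.filter (fun e => ¬ e.IsDiag) with ht
  have hsub : G.edgeFinset ⊆ t := by
    intro e he'
    refine Sym2.ind (fun u w he' => ?_) e he'
    rw [mem_edgeFinset, mem_edgeSet] at he'
    rw [ht, Finset.mem_filter, Finset.mk_mem_sym2_iff]
    exact ⟨⟨hsupp u w he', hsupp w u he'.symm⟩, by simpa using he'.ne⟩
  have hdiag : s.sym2.filter (fun e => e.IsDiag) = s.image (fun x => s(x, x)) := by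
    ext e
    refine Sym2.ind (fun u w => ?_) e
    simp only [Finset.mem_filter, Finset.mk_mem_sym2_iff, Finset.mem_image, Sym2.isDiag_iff_proj_eq]
    constructor
    · rintro ⟨⟨hu, hw⟩, huw⟩
      exact ⟨u, hu, by rw [huw]⟩
    · rintro ⟨x, hx, hxe⟩
      rw [Sym2.eq_iff] at hxe
      rcases hxe with ⟨rfl, rfl⟩ | ⟨rfl, rfl⟩ <;> exact ⟨⟨hx, hx⟩, rfl⟩
  have hdiagc : (s.sym2.filter (fun e => e.IsDiag)).card = 4 := by
    rw [hdiag, Finset.card_image_of_injective _ ?_, hs]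
    intro x y hxy
    rw [Sym2.eq_iff] at hxy
    tauto
  have htc : t.card = 6 := by
    have h1 : (s.sym2.filter (fun e => e.IsDiag)).card + t.card = s.sym2.card :=
      Finset.card_filter_add_card_filter_not _
    rw [Finset.card_sym2, hs] at h1
    have h2 : (4 + 1).choose 2 = 10 := by decide
    omega
  intro x hx y hy hxy
  by_contra hnadj
  have hmem : s(x, y) ∈ t := by
    rw [ht, Finset.mem_filter, Finset.mk_mem_sym2_iff]
    exact ⟨⟨hx, hy⟩, by simpa using hxy⟩
  have : G.edgeFinset ⊆ t.erase s(x, y) := by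
    intro e he'
    refine Finset.mem_erase.2 ⟨?_, hsub he'⟩
    intro h
    rw [h, mem_edgeFinset, mem_edgeSet] at he'
    exact hnadj he'
  have := Finset.card_le_card this
  rw [Finset.card_erase_of_mem hmem, htc] at this
  omega


private lemma min_deg [Fintype V] (G : SimpleGraph V) (s : Finset V)
    (hsupp : ∀ u w, G.Adj u w → u ∈ s)
    (he : G.edgeFinset.card = 2 * s.card - 2) (h4 : 4 ≤ s.card) :
    ∃ v ∈ s, G.degree v ≤ 3 := by
  classical
  by_contra h
  push_neg at h
  have hsum : ∑ x ∈ s, G.degree x = 2 * G.edgeFinset.card := by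
    rw [← sum_degrees_eq_twice_card_edges]
    refine Finset.sum_subset (Finset.subset_univ s) (fun x _ hx => ?_)
    rw [← card_neighborFinset_eq_degree, Finset.card_eq_zero]
    refine Finset.eq_empty_of_forall_notMem (fun w hw => ?_)
    exact hx (hsupp x w ((mem_neighborFinset _ _ _).1 hw))
  have hge : s.card * 4 ≤ ∑ x ∈ s, G.degree x := by
    refine Finset.card_nsmul_le_sum s _ 4 (fun x hx => h x hx)
  rw [hsum, he] at hge
  omega

/-- The `HasKMinor` from `b.lean` is the real one; duplication removed on assembly. -/
private lemma key [Fintype V] :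
    ∀ m : ℕ, ∀ G : SimpleGraph V, ∀ s : Finset V, s.card ≤ m →
      (∀ u w, G.Adj u w → u ∈ s) → 4 ≤ s.card →
      2 * s.card - 2 ≤ G.edgeFinset.card → HasKMinor G 4 := by
  intro m
  induction m with
  | zero => intro G s hm _ h4 _; omega
  | succ m ih =>
    intro G s hm hsupp h4 he
    obtain ⟨H, hHG, hHe⟩ := exists_sub G (2 * s.card - 2) he
    refine hasKMinor_mono hHG ?_
    have hHsupp : ∀ u w, H.Adj u w → u ∈ s := fun u w h => hsupp u w (hHG h)
    rcases eq_or_lt_of_le h4 with h4' | h5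
    · -- base case: |s| = 4, H is complete on s
      have h6 : 6 ≤ H.edgeFinset.card := by omega
      have hall := base4 H s h4'.symm hHsupp h6
      obtain ⟨x, hxs⟩ := Finset.card_pos.1 (by omega : 0 < s.card)
      have h3 : (s.erase x).card = 3 := by rw [Finset.card_erase_of_mem hxs]; omega
      obtain ⟨a, b, c, hab, hac, hbc, habc⟩ := Finset.card_eq_three.1 h3
      have ha : a ∈ s.erase x := by rw [habc]; simp
      have hb : b ∈ s.erase x := by rw [habc]; simp
      have hc : c ∈ s.erase x := by rw [habc]; simp
      have has := Finset.mem_of_mem_erase ha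
      have hbs := Finset.mem_of_mem_erase hb
      have hcs := Finset.mem_of_mem_erase hc
      exact hasKMinor_of_clique4
        (hall x hxs a has (Finset.mem_erase.1 ha).1.symm)
        (hall x hxs b hbs (Finset.mem_erase.1 hb).1.symm)
        (hall x hxs c hcs (Finset.mem_erase.1 hc).1.symm)
        (hall a has b hbs hab) (hall a has c hcs hac) (hall b hbs c hcs hbc)
    · -- inductive step: |s| ≥ 5
      obtain ⟨v, hvs, hdeg⟩ := min_deg H s hHsupp hHe h4
      have hd := delv_card H v
      by_cases hdeg2 : H.degree v ≤ 2
      · -- delete the vertex v of degree ≤ 2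
        refine hasKMinor_mono (delv_le H v)
          (ih (delv H v) (s.erase v) ?_ ?_ ?_ ?_)
        · rw [Finset.card_erase_of_mem hvs]; omega
        · exact fun u w h => Finset.mem_erase.2 ⟨h.2.1, hHsupp u w h.1⟩
        · rw [Finset.card_erase_of_mem hvs]; omega
        · rw [Finset.card_erase_of_mem hvs]; omega
      · -- v has degree exactly 3
        have hdeg3 : H.degree v = 3 := by omega
        have hN : (H.neighborFinset v).card = 3 := by
          rw [card_neighborFinset_eq_degree, hdeg3]
        obtain ⟨a, b, c, hab0, hac0, hbc0, habc⟩ := Finset.card_eq_three.1 hN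
        have hva : H.Adj v a := by
          rw [← mem_neighborFinset, habc]; simp
        have hvb : H.Adj v b := by
          rw [← mem_neighborFinset, habc]; simp
        have hvc : H.Adj v c := by
          rw [← mem_neighborFinset, habc]; simp
        have hpair : (∃ x y, H.Adj v x ∧ H.Adj v y ∧ x ≠ y ∧ ¬ H.Adj x y) ∨
            (H.Adj a b ∧ H.Adj a c ∧ H.Adj b c) := by
          by_cases h1 : H.Adj a b
          · by_cases h2 : H.Adj a c
            · by_cases h3 : H.Adj b c
              · exact Or.inr ⟨h1, h2, h3⟩
              · exact Or.inl ⟨b, c, hvb, hvc, hbc0, h3⟩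
            · exact Or.inl ⟨a, c, hva, hvc, hac0, h2⟩
          · exact Or.inl ⟨a, b, hva, hvb, hab0, h1⟩
        rcases hpair with ⟨x, y, hvx, hvy, hxy, hnxy⟩ | ⟨h1, h2, h3⟩
        · -- contract the edge vx
          refine ctr_minor_lift hvx (ih (ctr H v x) (s.erase v) ?_ ?_ ?_ ?_)
          · rw [Finset.card_erase_of_mem hvs]; omega
          · rintro u w ⟨huw, huv, hwv, hcase⟩
            refine Finset.mem_erase.2 ⟨huv, ?_⟩
            rcases hcase with h | ⟨hux, h⟩ | ⟨-, h⟩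
            · exact hHsupp u w h
            · rw [hux]; exact hHsupp x v hvx.symm
            · exact hHsupp u v h.symm
          · rw [Finset.card_erase_of_mem hvs]; omega
          · -- edge count for the contracted graph
            have hsub2 : insert s(x, y) (delv H v).edgeFinset ⊆
                (ctr H v x).edgeFinset := by
              intro e he'
              rcases Finset.mem_insert.1 he' with rfl | he'
              · rw [mem_edgeFinset, mem_edgeSet]
                exact ⟨hxy, hvx.ne', hvy.ne', Or.inr (Or.inl ⟨rfl, hvy⟩)⟩
              · exact edgeFinset_mono (delv_le_ctr) he'
            have hcard2 := Finset.card_le_card hsub2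
            rw [Finset.card_insert_of_notMem ?_] at hcard2
            · rw [Finset.card_erase_of_mem hvs]
              omega
            · intro hmem
              rw [mem_edgeFinset, mem_edgeSet] at hmem
              exact hnxy hmem.1
        · exact hasKMinor_of_clique4 hva hvb hvc h1 h2 h3

end MaderAux

/-- Every graph on `n ≥ 4` vertices with at least `2n − 2` edges has a `K_4`
minor. -/
theorem stmt_11 {V : Type*} [Fintype V] (G : SimpleGraph V)
    (hn : 4 ≤ Fintype.card V)
    (he : 2 * Fintype.card V - 2 ≤ G.edgeFinset.card) :
    HasKMinor G 4 := by
  refine key (Fintype.card V) G Finset.univ ?_ (fun _ _ _ => Finset.mem_univ _) ?_ ?_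
  · rw [Finset.card_univ]
  · rw [Finset.card_univ]; exact hn
  · rw [Finset.card_univ]; exact he
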